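/- arXiv:1909.05513 — 2 statements merged into one kernel-verified Lean document; each statement's English description precedes it below -/
import Mathlib

section
/- Let (X,d) be a metric space and f : X → ℝ a bounded continuous function with sup f ≤ 1. Define Sf(y) := inf_{x ∈ X_f} { 1 − cos²(d_{π/2}(x,y)) / (1 − f(x)) } if the open ball B_y(π/2) ⊆ X_f, and Sf(y) := −∞ otherwise, where X_f := {x : f(x) < 1} and d_{π/2} := min(d, π/2). Then Sf is upper semi-continuous. -/
open Real Classical

/-- The `S`-transform of `f`: `Sf(y) = inf_{x ∈ X_f} (1 − cos²(d_{π/2}(x,y))/(1−f(x)))`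
if the open ball `B_y(π/2)` is contained in `X_f = {f < 1}`, and `−∞` otherwise. -/
noncomputable def Stransform {X : Type*} [MetricSpace X] (f : X → ℝ) (y : X) : EReal :=
  if Metric.ball y (π / 2) ⊆ {x | f x < 1} then
    ⨅ x : {x : X // f x < 1},
      ((1 - Real.cos (min (dist (x : X) y) (π / 2)) ^ 2 / (1 - f (x : X)) : ℝ) : EReal)
  else ⊥

theorem Stransform_upperSemicontinuous {X : Type*} [MetricSpace X]
    (f : X → ℝ) (hc : Continuous f) (hb : ∃ C, ∀ x, |f x| ≤ C)
    (h1 : ∀ x, f x ≤ 1) :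
    UpperSemicontinuous (Stransform f) := by
  intro y c hcy
  by_cases hball : Metric.ball y (π / 2) ⊆ {x | f x < 1}
  · rw [Stransform, if_pos hball] at hcy
    have hbot : (⊥ : EReal) < c := lt_of_le_of_lt bot_le hcy
    obtain ⟨x, hx⟩ := iInf_lt_iff.mp hcy
    have hcont : ContinuousAt
        (fun y' => ((1 - Real.cos (min (dist (x : X) y') (π / 2)) ^ 2 / (1 - f (x : X)) : ℝ)
          : EReal)) y := by
      apply Continuous.continuousAt
      apply continuous_coe_real_ereal.comp
      fun_prop
    have hev : ∀ᶠ y' in nhds y,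
        ((1 - Real.cos (min (dist (x : X) y') (π / 2)) ^ 2 / (1 - f (x : X)) : ℝ) : EReal) < c :=
      hcont.eventually_lt continuousAt_const hx
    filter_upwards [hev] with y' hy'
    rw [Stransform]
    by_cases hb' : Metric.ball y' (π / 2) ⊆ {x | f x < 1}
    · rw [if_pos hb']
      exact lt_of_le_of_lt (iInf_le _ x) hy'
    · rw [if_neg hb']; exact hbot
  · rw [Stransform, if_neg hball] at hcy
    obtain ⟨x₀, hx₀b, hx₀f⟩ := Set.not_subset.mp hball
    have hε : 0 < π / 2 - dist x₀ y := by
      have := Metric.mem_ball.mp hx₀b; linarith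
    have hev : ∀ᶠ y' in nhds y, y' ∈ Metric.ball y (π / 2 - dist x₀ y) :=
      Metric.ball_mem_nhds y hε
    filter_upwards [hev] with y' hy'
    have hmem : x₀ ∈ Metric.ball y' (π / 2) := by
      rw [Metric.mem_ball] at *
      have := dist_triangle x₀ y y'
      have : dist x₀ y' ≤ dist x₀ y + dist y y' := this
      have h2 : dist y y' = dist y' y := dist_comm y y'
      linarith [Metric.mem_ball.mp hy']
    have hb' : ¬ Metric.ball y' (π / 2) ⊆ {x | f x < 1} := fun h => hx₀f (h hmem)
    rw [Stransform, if_neg hb']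
    exact hcy
end

section
/- Let (Y,d) be an NPC space (complete and for every x₁,x₂ there exists y with d²(z,y) ≤ ½d²(z,x₁) + ½d²(z,x₂) − ¼d²(x₁,x₂) for all z). Then for any k points y₁,…,y_k and weights λᵢ ≥ 0 with ∑λᵢ = 1, the functional y ↦ ∑ᵢ λᵢ d²(y,yᵢ) has a unique minimizer. -/
open Real

/-- In an NPC space (complete, with midpoints satisfying the NPC inequality), the weighted
sum of squared distances to finitely many points has a unique minimizer. -/
theorem npc_unique_barycenter {Y : Type*} [MetricSpace Y] [CompleteSpace Y]
    (hNPC : ∀ x₁ x₂ : Y, ∃ y : Y, ∀ z : Y,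
      dist z y ^ 2 ≤ (1 / 2) * dist z x₁ ^ 2 + (1 / 2) * dist z x₂ ^ 2 -
        (1 / 4) * dist x₁ x₂ ^ 2)
    (k : ℕ) (y : Fin k → Y) (l : Fin k → ℝ) (hl : ∀ i, 0 ≤ l i) (hsum : ∑ i, l i = 1) :
    ∃! z : Y, ∀ w : Y, ∑ i, l i * dist z (y i) ^ 2 ≤ ∑ i, l i * dist w (y i) ^ 2 := by
  classical
  have hk : 0 < k := by
    rcases Nat.eq_zero_or_pos k with h | h
    · subst h; simp at hsum
    · exact h
  have hY : Nonempty Y := ⟨y ⟨0, hk⟩⟩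
  set F : Y → ℝ := fun z => ∑ i, l i * dist z (y i) ^ 2 with hF
  have hFnonneg : ∀ z, 0 ≤ F z := fun z =>
    Finset.sum_nonneg fun i _ => mul_nonneg (hl i) (sq_nonneg _)
  have hFcont : Continuous F := by
    apply continuous_finset_sum
    intro i _
    exact continuous_const.mul ((continuous_id.dist continuous_const).pow 2)
  -- convexity from NPC
  have hconv : ∀ x₁ x₂ : Y, ∃ p : Y,
      F p ≤ (1/2) * F x₁ + (1/2) * F x₂ - (1/4) * dist x₁ x₂ ^ 2 := by
    intro x₁ x₂
    obtain ⟨p, hp⟩ := hNPC x₁ x₂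
    refine ⟨p, ?_⟩
    have h1 : F p ≤ ∑ i, l i * ((1/2) * dist (y i) x₁ ^ 2 + (1/2) * dist (y i) x₂ ^ 2
        - (1/4) * dist x₁ x₂ ^ 2) := by
      apply Finset.sum_le_sum
      intro i _
      rw [dist_comm p (y i)]
      exact mul_le_mul_of_nonneg_left (hp (y i)) (hl i)
    have h2 : ∑ i, l i * ((1/2) * dist (y i) x₁ ^ 2 + (1/2) * dist (y i) x₂ ^ 2
        - (1/4) * dist x₁ x₂ ^ 2)
        = (1/2) * F x₁ + (1/2) * F x₂ - (1/4) * dist x₁ x₂ ^ 2 := by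
      simp only [hF, mul_add, mul_sub, Finset.sum_add_distrib, Finset.sum_sub_distrib,
        Finset.mul_sum]
      congr 1
      · congr 1 <;>
          (apply Finset.sum_congr rfl; intro i _; rw [dist_comm]; ring)
      · rw [show ∀ c : ℝ, (fun i => l i * ((1/4) * c)) = fun i => l i * ((1/4) * c) from
          fun c => rfl]
        calc ∑ i, l i * ((1/4) * dist x₁ x₂ ^ 2)
            = (∑ i, l i) * ((1/4) * dist x₁ x₂ ^ 2) := by rw [Finset.sum_mul]
          _ = (1/4) * dist x₁ x₂ ^ 2 := by rw [hsum, one_mul]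
    linarith [h1, h2.le, h2.ge]
  set m : ℝ := sInf (Set.range F) with hm
  have hbdd : BddBelow (Set.range F) := ⟨0, by rintro _ ⟨z, rfl⟩; exact hFnonneg z⟩
  have hne : (Set.range F).Nonempty := Set.range_nonempty F
  have hmle : ∀ z, m ≤ F z := fun z => csInf_le hbdd ⟨z, rfl⟩
  -- key quadratic estimate
  have key : ∀ x₁ x₂ : Y, dist x₁ x₂ ^ 2 ≤ 2 * (F x₁ - m) + 2 * (F x₂ - m) := by
    intro x₁ x₂
    obtain ⟨p, hp⟩ := hconv x₁ x₂
    have := hmle p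
    linarith
  -- minimizing sequence
  have hseq : ∀ n : ℕ, ∃ x : Y, F x < m + (1/2 : ℝ) ^ n := by
    intro n
    have hpos : m < m + (1/2 : ℝ) ^ n := by
      have : (0:ℝ) < (1/2 : ℝ) ^ n := by positivity
      linarith
    obtain ⟨_, ⟨x, rfl⟩, hx⟩ := exists_lt_of_csInf_lt hne hpos
    exact ⟨x, hx⟩
  choose x hx using hseq
  have hcauchy : CauchySeq x := by
    rw [Metric.cauchySeq_iff]
    intro ε hε
    obtain ⟨N, hN⟩ := exists_pow_lt_of_lt_one (show (0:ℝ) < ε ^ 2 / 4 by positivity)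
      (by norm_num : (1/2 : ℝ) < 1)
    refine ⟨N, fun a ha b hb => ?_⟩
    have hxa : F (x a) - m < (1/2 : ℝ) ^ N := by
      have := hx a
      have h2 : (1/2 : ℝ) ^ a ≤ (1/2 : ℝ) ^ N :=
        pow_le_pow_of_le_one (by norm_num) (by norm_num) ha
      linarith
    have hxb : F (x b) - m < (1/2 : ℝ) ^ N := by
      have := hx b
      have h2 : (1/2 : ℝ) ^ b ≤ (1/2 : ℝ) ^ N :=
        pow_le_pow_of_le_one (by norm_num) (by norm_num) hb
      linarith
    have hd : dist (x a) (x b) ^ 2 < ε ^ 2 := by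
      have := key (x a) (x b)
      nlinarith
    exact lt_of_pow_lt_pow_left₀ 2 hε.le hd
  obtain ⟨z, hz⟩ := cauchySeq_tendsto_of_complete hcauchy
  -- F z = m
  have hFx_tendsto : Filter.Tendsto (F ∘ x) Filter.atTop (nhds m) := by
    have hlow : ∀ n, m ≤ F (x n) := fun n => hmle (x n)
    have hupper : ∀ n, F (x n) ≤ m + (1/2 : ℝ) ^ n := fun n => (hx n).le
    have h1 : Filter.Tendsto (fun n : ℕ => m + (1/2 : ℝ) ^ n) Filter.atTop (nhds m) := by
      have : Filter.Tendsto (fun n : ℕ => (1/2 : ℝ) ^ n) Filter.atTop (nhds 0) :=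
        tendsto_pow_atTop_nhds_zero_of_lt_one (by norm_num) (by norm_num)
      simpa using tendsto_const_nhds.add this
    exact tendsto_of_tendsto_of_tendsto_of_le_of_le tendsto_const_nhds h1 hlow hupper
  have hFz : F z = m := by
    have h2 : Filter.Tendsto (F ∘ x) Filter.atTop (nhds (F z)) :=
      (hFcont.continuousAt).tendsto.comp hz
    exact tendsto_nhds_unique h2 hFx_tendsto
  refine ⟨z, fun w => ?_, ?_⟩
  · show F z ≤ F w
    rw [hFz]; exact hmle w
  intro z' hz'
  have hFz' : F z' = m := le_antisymm
    (by have := hz' z; change F z' ≤ F z at this; rwa [hFz] at this) (hmle z')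
  have hd : dist z' z ^ 2 ≤ 0 := by
    have := key z' z
    rw [hFz, hFz'] at this
    linarith
  have : dist z' z = 0 := by nlinarith [dist_nonneg (x := z') (y := z), sq_nonneg (dist z' z)]
  exact dist_eq_zero.mp this
end
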